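/- For the extension of the list monad L to V-relations, defined on r : X ⇸ Y by (Lr)(x̲, y̲) = r(x₁,y₁) ⊗ ... ⊗ r(xₙ,yₙ) if the lists x̲ and y̲ have equal length n, and ⊥ otherwise, one has: L(1_X) = 1_{LX}, L(s ∘ r) = Ls ∘ Lr, and L(r°) = (Lr)°, i.e., the extension is functorial and preserves the involution. -/

import Mathlib

variable {V : Type*} [CommMonoid V] [CompleteLattice V]

/-- The extension of the list monad to `V`-relations: `(Lr)(x̲, y̲)` is the product
`r x₁ y₁ ⊗ ... ⊗ r xₙ yₙ` if the lists have the same length, and `⊥` otherwise. -/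
def Lrel {X Y : Type*} (r : X → Y → V) : List X → List Y → V
  | [], [] => 1
  | x :: xs, y :: ys => r x y * Lrel r xs ys
  | [], _ :: _ => ⊥
  | _ :: _, [] => ⊥

open IsQuantale

lemma q_mul_bot [IsQuantale V] (x : V) : x * (⊥ : V) = ⊥ := by
  rw [← sSup_empty, mul_sSup_distrib]; simp

lemma q_bot_mul [IsQuantale V] (x : V) : (⊥ : V) * x = ⊥ := by
  rw [← sSup_empty, sSup_mul_distrib]; simp

lemma iSup_list_split {Y : Type*} (f : List Y → V) :
    (⨆ ys : List Y, f ys) = f [] ⊔ ⨆ y : Y, ⨆ ys : List Y, f (y :: ys) := by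
  apply le_antisymm
  · apply iSup_le
    intro ys
    cases ys with
    | nil => exact le_sup_left
    | cons y ys =>
        exact le_sup_of_le_right (le_iSup₂ (f := fun y ys => f (y :: ys)) y ys)
  · apply sup_le (le_iSup _ [])
    exact iSup_le fun y => iSup_le fun ys => le_iSup f (y :: ys)

/-- The extension of the list monad to `V`-relations is functorial and preserves
the involution. -/
theorem Lrel_functorial_and_involutive
    [IsQuantale V] {X Y Z : Type*} :
    -- L(1_X) = 1_{LX}
    (∀ xs ys : List X,
        Lrel (fun x x' : X => ⨆ _ : x = x', (1 : V)) xs ys =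
          ⨆ _ : xs = ys, (1 : V)) ∧
    -- L(s ∘ r) = Ls ∘ Lr
    (∀ (r : X → Y → V) (s : Y → Z → V) (xs : List X) (zs : List Z),
        Lrel (fun x z => ⨆ y : Y, r x y * s y z) xs zs =
          ⨆ ys : List Y, Lrel r xs ys * Lrel s ys zs) ∧
    -- L(r°) = (Lr)°
    (∀ (r : X → Y → V) (xs : List X) (ys : List Y),
        Lrel (fun y x => r x y) ys xs = Lrel r xs ys) := by
  refine ⟨?_, ?_, ?_⟩
  · intro xs
    induction xs with
    | nil => intro ys; cases ys <;> simp [Lrel]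
    | cons x xs ih =>
        intro ys
        cases ys with
        | nil => simp [Lrel]
        | cons y ys =>
            simp only [Lrel, ih]
            by_cases hx : x = y
            · by_cases hl : xs = ys <;> simp [hx, hl, q_mul_bot]
            · simp [hx, q_bot_mul]
  · intro r s xs
    induction xs with
    | nil =>
        intro zs
        cases zs with
        | nil =>
            simp only [Lrel]
            rw [iSup_list_split (fun ys => Lrel r [] ys * Lrel s ys [])]
            simp [Lrel, q_bot_mul]
        | cons z zs =>
            simp only [Lrel]
            rw [iSup_list_split (fun ys => Lrel r [] ys * Lrel s ys (z :: zs))]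
            simp [Lrel, q_bot_mul, q_mul_bot]
    | cons x xs ih =>
        intro zs
        cases zs with
        | nil =>
            simp only [Lrel]
            rw [iSup_list_split (fun ys => Lrel r (x :: xs) ys * Lrel s ys [])]
            simp [Lrel, q_bot_mul, q_mul_bot]
        | cons z zs =>
            simp only [Lrel, ih]
            rw [iSup_list_split (fun ys => Lrel r (x :: xs) ys * Lrel s ys (z :: zs))]
            simp only [Lrel, q_bot_mul, bot_sup_eq]
            rw [Quantale.iSup_mul_distrib]
            simp only [Quantale.mul_iSup_distrib]
            congr 1; ext y; congr 1; ext ys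
            rw [mul_mul_mul_comm]
  · intro r xs
    induction xs with
    | nil => intro ys; cases ys <;> simp [Lrel]
    | cons x xs ih =>
        intro ys
        cases ys with
        | nil => simp [Lrel]
        | cons y ys => simp [Lrel, ih, mul_comm, mul_assoc, mul_left_comm]
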